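/- Let a, b > 0 be real numbers. If m, n, p, q are integers with |m+nτ′| ≤ a and |(pτ−q)/√5| ≤ b, then |exp(−2πi·(m+nτ)·((q−pτ′)/√5)) − 1| ≤ 2πab. In other words, for every x in ⋀([−a,a]) and every y in ⋀⋆([−b,b]) one has |e^{−2πi x y} − 1| ≤ 2πab. -/

import Mathlib

noncomputable def tau : ℝ := (1 + Real.sqrt 5) / 2
noncomputable def tau' : ℝ := (1 - Real.sqrt 5) / 2

lemma aux_exp_bound (θ : ℝ) : ‖Complex.exp (θ * Complex.I) - 1‖ ≤ |θ| := by
  have hsq : (‖Complex.exp (θ * Complex.I) - 1‖)^2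
      = (Real.cos θ - 1)^2 + (Real.sin θ)^2 := by
    rw [Complex.sq_norm, Complex.normSq_apply]
    simp [Complex.exp_ofReal_mul_I_re, Complex.exp_ofReal_mul_I_im]
    ring
  have h1 : Real.sin (θ/2) ^ 2 ≤ (θ/2)^2 := Real.sin_sq_le_sq
  have h2 : Real.cos θ = 1 - 2 * Real.sin (θ/2)^2 := by
    have h := Real.cos_two_mul (θ/2)
    have h' := Real.sin_sq_add_cos_sq (θ/2)
    rw [show 2 * (θ/2) = θ by ring] at h
    linarith
  have hle : (‖Complex.exp (θ * Complex.I) - 1‖)^2 ≤ θ^2 := by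
    rw [hsq]
    nlinarith [Real.sin_sq_add_cos_sq θ]
  calc ‖Complex.exp (θ * Complex.I) - 1‖
      = Real.sqrt ((‖Complex.exp (θ * Complex.I) - 1‖)^2) := by
        rw [Real.sqrt_sq (norm_nonneg _)]
    _ ≤ Real.sqrt (θ^2) := Real.sqrt_le_sqrt hle
    _ = |θ| := Real.sqrt_sq_eq_abs θ

theorem exp_pairing_estimate (a b : ℝ) (ha : 0 < a) (hb : 0 < b)
    (m n p q : ℤ)
    (hx : |(m : ℝ) + n * tau'| ≤ a)
    (hy : |((p : ℝ) * tau - q) / Real.sqrt 5| ≤ b) :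
    norm
      (Complex.exp (-2 * Real.pi * Complex.I *
        ((((m : ℝ) + n * tau) * (((q : ℝ) - p * tau') / Real.sqrt 5) : ℝ) : ℂ)) - 1)
      ≤ 2 * Real.pi * a * b := by
  set s := Real.sqrt 5 with hsdef
  have hs : s^2 = 5 := Real.sq_sqrt (by norm_num)
  have hs0 : (0:ℝ) < s := Real.sqrt_pos.2 (by norm_num)
  set u : ℝ := (m : ℝ) + n * tau' with hu
  set v : ℝ := ((p : ℝ) * tau - q) / s with hv
  have key : ((m : ℝ) + n * tau) * (((q : ℝ) - p * tau') / s)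
      = ((m*p + n*q : ℤ) : ℝ) - u * v := by
    rw [hu, hv]
    unfold tau tau'
    rw [← hsdef]
    field_simp
    push_cast
    ring_nf
  have hexp : (-2 * (Real.pi:ℂ) * Complex.I *
        ((((m : ℝ) + n * tau) * (((q : ℝ) - p * tau') / s) : ℝ) : ℂ))
      = ((2 * Real.pi * (u * v) : ℝ) : ℂ) * Complex.I
        + (-(m*p + n*q) : ℤ) * (2 * Real.pi * Complex.I) := by
    rw [key]; push_cast; ring
  rw [hexp, Complex.exp_add, Complex.exp_int_mul_two_pi_mul_I, mul_one]
  calc ‖Complex.exp (((2 * Real.pi * (u * v) : ℝ) : ℂ) * Complex.I) - 1‖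
      ≤ |2 * Real.pi * (u * v)| := aux_exp_bound _
    _ = 2 * Real.pi * |u| * |v| := by
        rw [abs_mul, abs_mul, abs_mul, abs_of_nonneg (show (0:ℝ) ≤ 2 by norm_num),
          abs_of_nonneg Real.pi_pos.le]
        ring
    _ ≤ 2 * Real.pi * a * b := by
        gcongr <;> first | positivity | exact hx | exact hy
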